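/- arXiv:2109.02030 — 2 statements merged into one kernel-verified Lean document; each statement's English description precedes it below -/
import Mathlib

section
/- Let k > 1 and k* = k/(k−1). Let f be a continuous function on 𝒫_k that is L-differentiable at every μ ∈ 𝒫_k, such that for every μ the L-derivative D^L f(μ) has a continuous version satisfying |D^L f(μ)(x)| ≤ c(μ)(1+|x|^{k−1}) for some constant c(μ), and such that K₀ := sup_{μ ∈ 𝒫_k} ‖D^L f(μ)‖_{L^{k*}(μ)} < ∞. Then f is globally Lipschitz with respect to the L^k-Wasserstein distance: |f(μ₁) − f(μ₂)| ≤ K₀ · W_k(μ₁, μ₂) for all μ₁, μ₂ ∈ 𝒫_k. -/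
open MeasureTheory Filter
open scoped ENNReal Topology RealInnerProductSpace

noncomputable section

variable (d : ℕ)

abbrev Ed (d : ℕ) := EuclideanSpace ℝ (Fin d)

/-- The space `𝒫_k` of probability measures on `ℝ^d` with finite `k`-th moment. -/
def Pk (k : ℝ) (d : ℕ) : Set (Measure (Ed d)) :=
  {μ | IsProbabilityMeasure μ ∧ Integrable (fun x => ‖x‖ ^ k) μ}

/-- The `L^k`-Wasserstein distance on `ℝ^d`, defined as the infimum over couplings. -/
def Wass (k : ℝ) (d : ℕ) (μ ν : Measure (Ed d)) : ℝ :=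
  sInf {r : ℝ | ∃ π : Measure (Ed d × Ed d),
    π.map Prod.fst = μ ∧ π.map Prod.snd = ν ∧
    r = (∫ p, ‖p.1 - p.2‖ ^ k ∂π) ^ (1 / k)}

/-- `Df : ℝ^d → ℝ^d` is the `L`-derivative of `f` at `μ ∈ 𝒫_k`:
the first-order Taylor expansion of `f` along pushforwards `μ ∘ (id + φ)^{-1}` holds
with remainder `o(‖φ‖_{L^k(μ)})`. -/
def IsLDerivAt (k : ℝ) (d : ℕ) (f : Measure (Ed d) → ℝ) (μ : Measure (Ed d))
    (Df : Ed d → Ed d) : Prop :=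
  ∀ ε > (0:ℝ), ∃ δ > (0:ℝ), ∀ φ : Ed d → Ed d, Measurable φ →
    MemLp φ (ENNReal.ofReal k) μ →
    (∫ x, ‖φ x‖ ^ k ∂μ) ^ (1 / k) ≤ δ →
    |f (μ.map (fun x => x + φ x)) - f μ - ∫ x, ⟪Df x, φ x⟫ ∂μ|
      ≤ ε * (∫ x, ‖φ x‖ ^ k ∂μ) ^ (1 / k)

namespace WkAux

variable {d}

lemma wass_le (k : ℝ) {μ ν : Measure (Ed d)} (π : Measure (Ed d × Ed d))
    (h1 : π.map Prod.fst = μ) (h2 : π.map Prod.snd = ν) :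
    Wass k d μ ν ≤ (∫ p, ‖p.1 - p.2‖ ^ k ∂π) ^ (1 / k) := by
  apply csInf_le
  · refine ⟨0, ?_⟩
    rintro r ⟨π', -, -, rfl⟩
    exact Real.rpow_nonneg
      (integral_nonneg fun p => Real.rpow_nonneg (norm_nonneg _) _) _
  · exact ⟨π, h1, h2, rfl⟩

lemma wass_nonneg (k : ℝ) (μ ν : Measure (Ed d)) : 0 ≤ Wass k d μ ν := by
  apply Real.sInf_nonneg
  rintro r ⟨π', -, -, rfl⟩
  exact Real.rpow_nonneg
    (integral_nonneg fun p => Real.rpow_nonneg (norm_nonneg _) _) _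

lemma rpow_rpow_inv {k : ℝ} (hk : 0 < k) {x : ℝ} (hx : 0 ≤ x) :
    (x ^ k) ^ (1 / k) = x := by
  rw [← Real.rpow_mul hx, mul_one_div_cancel hk.ne', Real.rpow_one]

lemma mul_rpow_inv {k : ℝ} (hk : 0 < k) {c m : ℝ} (hc : 0 ≤ c) (hm : 0 ≤ m) :
    (c ^ k * m) ^ (1 / k) = c * m ^ (1 / k) := by
  rw [Real.mul_rpow (Real.rpow_nonneg hc _) hm, rpow_rpow_inv hk hc]

/-- The set of "bad" interpolation times where two atoms with different
velocities collide is finite. -/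
lemma bad_set_finite (R : Finset (Ed d × Ed d)) :
    {t : ℝ | ∃ q ∈ R, ∃ q' ∈ R, q.1 + t • (q.2 - q.1) = q'.1 + t • (q'.2 - q'.1) ∧
      q.2 - q.1 ≠ q'.2 - q'.1}.Finite := by
  have hsub : {t : ℝ | ∃ q ∈ R, ∃ q' ∈ R,
        q.1 + t • (q.2 - q.1) = q'.1 + t • (q'.2 - q'.1) ∧ q.2 - q.1 ≠ q'.2 - q'.1} ⊆
      ⋃ q ∈ (R : Set (Ed d × Ed d)), ⋃ q' ∈ (R : Set (Ed d × Ed d)),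
        {t : ℝ | q.1 + t • (q.2 - q.1) = q'.1 + t • (q'.2 - q'.1) ∧
          q.2 - q.1 ≠ q'.2 - q'.1} := by
    rintro t ⟨q, hq, q', hq', h⟩
    exact Set.mem_biUnion hq (Set.mem_biUnion hq' h)
  refine Set.Finite.subset ?_ hsub
  refine Set.Finite.biUnion R.finite_toSet fun q _ => ?_
  refine Set.Finite.biUnion R.finite_toSet fun q' _ => ?_
  apply Set.Subsingleton.finite
  intro t ht u hu
  have key : ∀ r : ℝ, q.1 + r • (q.2 - q.1) = q'.1 + r • (q'.2 - q'.1) →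
      r • ((q.2 - q.1) - (q'.2 - q'.1)) = q'.1 - q.1 := by
    intro r hr
    rw [smul_sub, sub_eq_sub_iff_add_eq_add, add_comm]
    exact hr
  have h1 := key t ht.1
  have h2 := key u hu.1
  have h3 : (t - u) • ((q.2 - q.1) - (q'.2 - q'.1)) = 0 := by
    rw [sub_smul, h1, h2, sub_self]
  rcases smul_eq_zero.mp h3 with h4 | h4
  · linarith [sub_eq_zero.mp h4]
  · exact absurd (sub_eq_zero.mp h4) ht.2

/-- Construction of a measurable bounded "velocity field" at a good time. -/
lemma exists_phi (R : Finset (Ed d × Ed d)) (t : ℝ)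
    (hgood : ∀ q ∈ R, ∀ q' ∈ R, q.1 + t • (q.2 - q.1) = q'.1 + t • (q'.2 - q'.1) →
      q.2 - q.1 = q'.2 - q'.1) :
    ∃ φ : Ed d → Ed d, Measurable φ ∧ (∃ C : ℝ, ∀ x, ‖φ x‖ ≤ C) ∧
      ∀ q ∈ R, φ (q.1 + t • (q.2 - q.1)) = q.2 - q.1 := by
  classical
  revert hgood
  induction R using Finset.induction_on with
  | empty =>
    intro _
    exact ⟨0, measurable_const, ⟨0, by simp⟩, by simp⟩
  | @insert a s ha ih =>
    intro hgood
    obtain ⟨φ, hφm, ⟨C, hC⟩, hφval⟩ := ih fun q hq q' hq' h =>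
      hgood q (Finset.mem_insert_of_mem hq) q' (Finset.mem_insert_of_mem hq') h
    refine ⟨fun x => if x = a.1 + t • (a.2 - a.1) then a.2 - a.1 else φ x, ?_,
      ⟨max C ‖a.2 - a.1‖, ?_⟩, ?_⟩
    · exact Measurable.ite (measurableSet_eq) measurable_const hφm
    · intro x
      by_cases hx : x = a.1 + t • (a.2 - a.1)
      · simp only [hx, if_pos rfl]
        exact le_max_right _ _
      · simp only [if_neg hx]
        exact (hC x).trans (le_max_left _ _)
    · intro q hq
      rcases Finset.mem_insert.mp hq with rfl | hqs
      · simp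
      · by_cases he : q.1 + t • (q.2 - q.1) = a.1 + t • (a.2 - a.1)
        · simp only []
          rw [if_pos he]
          exact (hgood q (Finset.mem_insert_of_mem hqs) a (Finset.mem_insert_self _ _) he).symm
        · simp only []
          rw [if_neg he]
          exact hφval q hqs

/-- Conversion between the real `L^k` norm as an integral and `eLpNorm`. -/
lemma Lk_eq_toReal_eLpNorm {k : ℝ} (hk : 0 < k) {α : Type*} [MeasurableSpace α]
    (P : Measure α) {V : Type*} [NormedAddCommGroup V] (F : α → V)
    (hF : AEStronglyMeasurable F P) :
    (∫ v, ‖F v‖ ^ k ∂P) ^ (1 / k) = (eLpNorm F (ENNReal.ofReal k) P).toReal := by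
  rw [eLpNorm_eq_lintegral_rpow_enorm_toReal (by simp [ENNReal.ofReal_eq_zero, not_le, hk])
    ENNReal.ofReal_ne_top]
  rw [ENNReal.toReal_ofReal hk.le]
  rw [integral_eq_lintegral_of_nonneg_ae
    (Eventually.of_forall fun x => Real.rpow_nonneg (norm_nonneg _) _)
    ((hF.norm.aemeasurable.pow aemeasurable_const).aestronglyMeasurable)]
  rw [← ENNReal.toReal_rpow]
  congr 2
  apply lintegral_congr fun x => ?_
  rw [← ofReal_norm, ENNReal.ofReal_rpow_of_nonneg (norm_nonneg _) hk.le]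


lemma seg_lemma (g : ℝ → ℝ) (L : ℝ) (hL : 0 ≤ L) (S : Set ℝ) (hS : S.Finite)
    (hg : ContinuousOn g (Set.Icc 0 1))
    (hloc : ∀ t ∈ Set.Ico (0:ℝ) 1, t ∉ S → ∀ η > (0:ℝ), ∃ δ > (0:ℝ), ∀ h : ℝ,
      0 < h → h ≤ δ → t + h ≤ 1 → |g (t + h) - g t| ≤ (L + η) * h) :
    |g 1 - g 0| ≤ L := by
  have seg0 : ∀ a b : ℝ, 0 ≤ a → a ≤ b → b ≤ 1 → (S ∩ Set.Ioo a b) = ∅ →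
      ∀ η > (0:ℝ), |g b - g a| ≤ (L + η) * (b - a) := by
    intro a b ha hab hb1 hSab η hη
    rcases eq_or_lt_of_le hab with rfl | hab
    · simp
    have hLη : 0 < L + η := lt_of_lt_of_le hη (le_add_of_nonneg_left hL)
    refine le_of_forall_pos_le_add (fun κ hκ => ?_)
    set F : ℝ → ℝ := fun t => |g t - g a| - ((L + η) * (t - a) + κ) with hF
    have hsub : Set.Icc a b ⊆ Set.Icc 0 1 := Set.Icc_subset_Icc ha hb1
    set T : Set ℝ := Set.Icc a b ∩ F ⁻¹' Set.Iic 0 with hT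
    have hgab : ContinuousOn g (Set.Icc a b) := hg.mono hsub
    have hFc : ContinuousOn F (Set.Icc a b) := by
      apply ContinuousOn.sub
      · exact (hgab.sub continuousOn_const).abs
      · fun_prop
    have hTclosed : IsClosed T :=
      hFc.preimage_isClosed_of_isClosed isClosed_Icc isClosed_Iic
    have haT : a ∈ T := by
      constructor
      · exact ⟨le_refl a, hab.le⟩
      · simp [hF, Set.mem_Iic]
        positivity
    have hTbdd : BddAbove T := ⟨b, fun t ht => ht.1.2⟩
    set c := sSup T with hc
    have hcT : c ∈ T := hTclosed.csSup_mem ⟨a, haT⟩ hTbdd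
    have hac : a ≤ c := le_csSup hTbdd haT
    have hcb : c ≤ b := hcT.1.2
    have hcle : F c ≤ 0 := hcT.2
    -- show c = b
    rcases eq_or_lt_of_le hcb with heq | hcb'
    · -- done: F b ≤ 0
      have h0 : F c ≤ 0 := hcle
      rw [heq] at h0
      simp only [hF, sub_nonpos] at h0
      linarith [h0]
    · exfalso
      rcases eq_or_lt_of_le hac with heq | hac'
      · -- c = a : use continuity at a to move right
        have hca : ContinuousWithinAt g (Set.Icc a b) a := hgab.continuousWithinAt ⟨le_refl a, hab.le⟩
        rw [Metric.continuousWithinAt_iff] at hca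
        obtain ⟨δ', hδ', hball⟩ := hca κ hκ
        set t := min (a + δ'/2) b with ht'
        have hta : a < t := by
          apply lt_min (by linarith) hab
        have htb : t ≤ b := min_le_right _ _
        have htIcc : t ∈ Set.Icc a b := ⟨hta.le, htb⟩
        have hdist : dist t a < δ' := by
          rw [Real.dist_eq, abs_of_nonneg (by linarith)]
          have : t ≤ a + δ'/2 := min_le_left _ _
          linarith
        have hgt : |g t - g a| < κ := by
          have := hball htIcc hdist
          rwa [Real.dist_eq] at this
        have : t ∈ T := by
          refine ⟨htIcc, ?_⟩
          simp only [hF, Set.mem_preimage, Set.mem_Iic, sub_nonpos]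
          nlinarith
        have h9 := le_csSup hTbdd this
        have h10 : a = sSup T := heq.trans hc
        linarith
      · -- a < c < b : use hloc at c
        have hcS : c ∉ S := by
          intro hcS
          have : c ∈ S ∩ Set.Ioo a b := ⟨hcS, hac', hcb'⟩
          rw [hSab] at this
          exact this
        have hc01 : c ∈ Set.Ico (0:ℝ) 1 := ⟨ha.trans hac, lt_of_lt_of_le hcb' hb1⟩
        obtain ⟨δ, hδ, hstep⟩ := hloc c hc01 hcS η hη
        set h := min δ (b - c) with hh
        have hh0 : 0 < h := lt_min hδ (by linarith)
        have hch : c + h ≤ b := by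
          have : h ≤ b - c := min_le_right _ _
          linarith
        have hbound := hstep h hh0 (min_le_left _ _) (hch.trans hb1)
        have : c + h ∈ T := by
          refine ⟨⟨by linarith, hch⟩, ?_⟩
          simp only [hF, Set.mem_preimage, Set.mem_Iic, sub_nonpos]
          have h1 : |g (c + h) - g a| ≤ |g (c + h) - g c| + |g c - g a| := abs_sub_le _ _ _
          have h2 : |g c - g a| ≤ (L + η) * (c - a) + κ := by
            have := hcle
            simp only [hF, sub_nonpos] at this
            linarith
          calc |g (c + h) - g a| ≤ (L + η) * h + ((L + η) * (c - a) + κ) := by linarith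
            _ = (L + η) * (c + h - a) + κ := by ring
        have := le_csSup hTbdd this
        linarith
  -- chaining over the finitely many bad points
  have chain : ∀ n : ℕ, ∀ a b : ℝ, 0 ≤ a → a ≤ b → b ≤ 1 → (S ∩ Set.Ioo a b).ncard ≤ n →
      ∀ η > (0:ℝ), |g b - g a| ≤ (L + η) * (b - a) := by
    intro n
    induction n with
    | zero =>
      intro a b ha hab hb1 hcard η hη
      have hfin : (S ∩ Set.Ioo a b).Finite := hS.inter_of_left _
      have : (S ∩ Set.Ioo a b) = ∅ := by
        rw [← Set.ncard_eq_zero hfin]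
        omega
      exact seg0 a b ha hab hb1 this η hη
    | succ n ih =>
      intro a b ha hab hb1 hcard η hη
      have hfin : (S ∩ Set.Ioo a b).Finite := hS.inter_of_left _
      rcases Set.eq_empty_or_nonempty (S ∩ Set.Ioo a b) with hemp | ⟨t, ht⟩
      · exact seg0 a b ha hab hb1 hemp η hη
      · obtain ⟨htS, hta, htb⟩ := ht
        have hsub1 : S ∩ Set.Ioo a t ⊆ (S ∩ Set.Ioo a b) \ {t} := by
          rintro u ⟨huS, hua, hut⟩
          exact ⟨⟨huS, hua, hut.trans htb⟩, by intro he; rw [Set.mem_singleton_iff] at he; subst he; linarith⟩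
        have hsub2 : S ∩ Set.Ioo t b ⊆ (S ∩ Set.Ioo a b) \ {t} := by
          rintro u ⟨huS, hut, hub⟩
          exact ⟨⟨huS, hta.trans hut, hub⟩, by intro he; rw [Set.mem_singleton_iff] at he; subst he; linarith⟩
        have hdcard : ((S ∩ Set.Ioo a b) \ {t}).ncard ≤ n := by
          have hmem : t ∈ S ∩ Set.Ioo a b := ⟨htS, hta, htb⟩
          have := Set.ncard_diff_singleton_lt_of_mem hmem hfin
          omega
        have h1 := ih a t ha hta.le (htb.le.trans hb1)
          ((Set.ncard_le_ncard hsub1 hfin.diff).trans hdcard) η hη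
        have h2 := ih t b (ha.trans hta.le) htb.le hb1
          ((Set.ncard_le_ncard hsub2 hfin.diff).trans hdcard) η hη
        calc |g b - g a| ≤ |g b - g t| + |g t - g a| := abs_sub_le _ _ _
          _ ≤ (L + η) * (b - t) + (L + η) * (t - a) := by linarith
          _ = (L + η) * (b - a) := by ring
  have : ∀ η > (0:ℝ), |g 1 - g 0| ≤ L + η := by
    intro η hη
    have := chain (S ∩ Set.Ioo 0 1).ncard 0 1 le_rfl zero_le_one le_rfl le_rfl η hη
    simpa using this
  refine le_of_forall_pos_le_add (fun η hη => ?_)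
  linarith [this η hη]

/-- Lipschitz estimate along a linear interpolation of a simple coupling. -/
lemma empirical_lipschitz (k : ℝ) (hk : 1 < k)
    (f : Measure (Ed d) → ℝ)
    (hfcont : ∀ μ ∈ Pk k d, ∀ ε > (0:ℝ), ∃ δ > (0:ℝ), ∀ ν ∈ Pk k d,
      Wass k d ν μ < δ → |f ν - f μ| < ε)
    (Df : Measure (Ed d) → Ed d → Ed d)
    (hDf : ∀ μ ∈ Pk k d, IsLDerivAt k d f μ (Df μ))
    (hDfcont : ∀ μ ∈ Pk k d, Continuous (Df μ))
    (K₀ : ℝ) (hK₀0 : 0 ≤ K₀)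
    (hK₀ : ∀ μ ∈ Pk k d, (∫ x, ‖Df μ x‖ ^ (k / (k - 1)) ∂μ) ^ (1 / (k / (k - 1))) ≤ K₀)
    (P : Measure (Ed d × Ed d)) (hP : IsProbabilityMeasure P)
    (s : SimpleFunc (Ed d × Ed d) (Ed d × Ed d)) :
    |f (P.map (fun v => (s v).1)) - f (P.map (fun v => (s v).2))| ≤
      K₀ * (∫ v, ‖(s v).2 - (s v).1‖ ^ k ∂P) ^ (1 / k) := by
  classical
  haveI := hP
  have hk0 : (0:ℝ) < k := by linarith
  -- basic measurability
  have hrk : Continuous fun r : ℝ => r ^ k :=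
    continuous_iff_continuousAt.mpr fun x => Real.continuousAt_rpow_const x k (Or.inr hk0.le)
  have hnormk_meas : Measurable fun x : Ed d => ‖x‖ ^ k :=
    hrk.measurable.comp measurable_norm
  have hwmeas : Measurable fun v : Ed d × Ed d => (s v).2 - (s v).1 :=
    (measurable_snd.comp s.measurable).sub (measurable_fst.comp s.measurable)
  obtain ⟨Cs, hCs⟩ := s.exists_forall_norm_le
  have hCs0 : 0 ≤ Cs := le_trans (norm_nonneg _) (hCs 0)
  have hwbound : ∀ v, ‖(s v).2 - (s v).1‖ ≤ 2 * Cs := by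
    intro v
    calc ‖(s v).2 - (s v).1‖ ≤ ‖(s v).2‖ + ‖(s v).1‖ := norm_sub_le _ _
      _ ≤ ‖s v‖ + ‖s v‖ := add_le_add (norm_snd_le _) (norm_fst_le _)
      _ ≤ 2 * Cs := by linarith [hCs v]
  set m2 := ∫ v, ‖(s v).2 - (s v).1‖ ^ k ∂P with hm2
  have hm2nonneg : 0 ≤ m2 :=
    integral_nonneg fun v => Real.rpow_nonneg (norm_nonneg _) _
  set M := m2 ^ (1 / k) with hM
  have hMnonneg : 0 ≤ M := Real.rpow_nonneg hm2nonneg _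
  have hwk_int : Integrable (fun v => ‖(s v).2 - (s v).1‖ ^ k) P := by
    refine Integrable.mono' (integrable_const ((2 * Cs) ^ k))
      (hrk.measurable.comp hwmeas.norm).aestronglyMeasurable ?_
    filter_upwards with v
    rw [Real.norm_of_nonneg (Real.rpow_nonneg (norm_nonneg _) _)]
    exact Real.rpow_le_rpow (norm_nonneg _) (hwbound v) hk0.le
  by_cases hm2z : m2 = 0
  · -- degenerate case: the two marginals agree
    have hzero : (fun v => ‖(s v).2 - (s v).1‖ ^ k) =ᵐ[P] 0 :=
      (integral_eq_zero_iff_of_nonneg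
        (fun v => Real.rpow_nonneg (norm_nonneg _) _) hwk_int).mp hm2z
    have hae : (fun v => (s v).1) =ᵐ[P] (fun v => (s v).2) := by
      filter_upwards [hzero] with v hv
      have hv' : ‖(s v).2 - (s v).1‖ ^ k = 0 := hv
      rw [Real.rpow_eq_zero (norm_nonneg _) hk0.ne'] at hv'
      have := sub_eq_zero.mp (norm_eq_zero.mp hv')
      exact this.symm
    rw [Measure.map_congr hae]
    simp only [sub_self, abs_zero]
    exact mul_nonneg hK₀0 hMnonneg
  -- main case
  have hm2pos : 0 < m2 := lt_of_le_of_ne hm2nonneg (Ne.symm hm2z)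
  have hMpos : 0 < M := Real.rpow_pos_of_pos hm2pos _
  set it : ℝ → (Ed d × Ed d) → Ed d :=
    fun t v => (s v).1 + t • ((s v).2 - (s v).1) with hit
  have hitmeas : ∀ t, Measurable (it t) := fun t =>
    (measurable_fst.comp s.measurable).add (hwmeas.const_smul t)
  set μt : ℝ → Measure (Ed d) := fun t => P.map (it t) with hμt
  have hμtprob : ∀ t, IsProbabilityMeasure (μt t) := fun t =>
    Measure.isProbabilityMeasure_map (hitmeas t).aemeasurable
  have hitbound : ∀ t ∈ Set.Icc (0:ℝ) 1, ∀ v, ‖it t v‖ ≤ 3 * Cs := by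
    intro t ht v
    have h1 : |t| ≤ 1 := abs_le.mpr ⟨by linarith [ht.1], ht.2⟩
    calc ‖it t v‖ ≤ ‖(s v).1‖ + ‖t • ((s v).2 - (s v).1)‖ := norm_add_le _ _
      _ = ‖(s v).1‖ + |t| * ‖(s v).2 - (s v).1‖ := by rw [norm_smul, Real.norm_eq_abs]
      _ ≤ Cs + 1 * (2 * Cs) := by
          refine add_le_add ((norm_fst_le _).trans (hCs v)) ?_
          exact mul_le_mul h1 (hwbound v) (norm_nonneg _) zero_le_one
      _ = 3 * Cs := by ring
  have hμtPk : ∀ t ∈ Set.Icc (0:ℝ) 1, μt t ∈ Pk k d := by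
    intro t ht
    refine ⟨hμtprob t, ?_⟩
    rw [hμt]
    rw [integrable_map_measure hnormk_meas.aestronglyMeasurable (hitmeas t).aemeasurable]
    refine Integrable.mono' (integrable_const ((3 * Cs) ^ k))
      ((hnormk_meas.comp (hitmeas t))).aestronglyMeasurable ?_
    filter_upwards with v
    simp only [Function.comp]
    rw [Real.norm_of_nonneg (Real.rpow_nonneg (norm_nonneg _) _)]
    exact Real.rpow_le_rpow (norm_nonneg _) (hitbound t ht v) hk0.le
  -- cost identity
  have hptwise : ∀ t t' : ℝ, ∀ v, it t' v - it t v = (t' - t) • ((s v).2 - (s v).1) := by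
    intro t t' v
    simp only [hit]
    rw [add_sub_add_left_eq_sub, ← sub_smul]
  have hcost : ∀ t t' : ℝ, ∫ v, ‖it t' v - it t v‖ ^ k ∂P = |t' - t| ^ k * m2 := by
    intro t t'
    rw [hm2, ← integral_const_mul]
    apply integral_congr_ae
    filter_upwards with v
    rw [hptwise t t' v, norm_smul, Real.norm_eq_abs,
      Real.mul_rpow (abs_nonneg _) (norm_nonneg _)]
  -- Wasserstein bound between interpolants
  have hWass : ∀ t t' : ℝ, Wass k d (μt t') (μt t) ≤ |t' - t| * M := by
    intro t t'
    have hpm : Measurable fun v => (it t' v, it t v) := (hitmeas t').prodMk (hitmeas t)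
    have h1 : (P.map (fun v => (it t' v, it t v))).map Prod.fst = μt t' := by
      rw [Measure.map_map measurable_fst hpm]; rfl
    have h2 : (P.map (fun v => (it t' v, it t v))).map Prod.snd = μt t := by
      rw [Measure.map_map measurable_snd hpm]; rfl
    have hle := wass_le k _ h1 h2
    have hasm : AEStronglyMeasurable (fun p : Ed d × Ed d => ‖p.1 - p.2‖ ^ k)
        (P.map (fun v => (it t' v, it t v))) :=
      (hnormk_meas.comp (measurable_fst.sub measurable_snd)).aestronglyMeasurable
    have hce : ∫ p, ‖p.1 - p.2‖ ^ k ∂(P.map (fun v => (it t' v, it t v))) =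
        |t' - t| ^ k * m2 := by
      rw [integral_map hpm.aemeasurable hasm]
      exact hcost t t'
    rw [hce] at hle
    calc Wass k d (μt t') (μt t) ≤ (|t' - t| ^ k * m2) ^ (1 / k) := hle
      _ = |t' - t| * M := mul_rpow_inv hk0 (abs_nonneg _) hm2nonneg
  set g : ℝ → ℝ := fun t => f (μt t) with hg
  -- continuity of g
  have hgc : ContinuousOn g (Set.Icc 0 1) := by
    intro t₀ ht₀
    rw [Metric.continuousWithinAt_iff]
    intro ε hε
    obtain ⟨δ', hδ', hf'⟩ := hfcont (μt t₀) (hμtPk t₀ ht₀) ε hε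
    refine ⟨δ' / M, div_pos hδ' hMpos, ?_⟩
    intro t ht hdist
    have hWle : Wass k d (μt t) (μt t₀) ≤ |t - t₀| * M := hWass t₀ t
    have hlt : |t - t₀| * M < δ' := by
      rw [Real.dist_eq] at hdist
      calc |t - t₀| * M < (δ' / M) * M := mul_lt_mul_of_pos_right hdist hMpos
        _ = δ' := by field_simp
    have := hf' (μt t) (hμtPk t ht) (lt_of_le_of_lt hWle hlt)
    rwa [Real.dist_eq]
  -- finite bad set
  have hSfin : {t : ℝ | ∃ q ∈ s.range, ∃ q' ∈ s.range,
      q.1 + t • (q.2 - q.1) = q'.1 + t • (q'.2 - q'.1) ∧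
      q.2 - q.1 ≠ q'.2 - q'.1}.Finite := bad_set_finite s.range
  -- local estimate
  have hloc : ∀ t ∈ Set.Ico (0:ℝ) 1, t ∉ {t : ℝ | ∃ q ∈ s.range, ∃ q' ∈ s.range,
      q.1 + t • (q.2 - q.1) = q'.1 + t • (q'.2 - q'.1) ∧ q.2 - q.1 ≠ q'.2 - q'.1} →
      ∀ η > (0:ℝ), ∃ δ > (0:ℝ), ∀ h : ℝ,
      0 < h → h ≤ δ → t + h ≤ 1 → |g (t + h) - g t| ≤ (K₀ * M + η) * h := by
    intro t ht htS η hη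
    have hμPk := hμtPk t ⟨ht.1, ht.2.le⟩
    haveI : IsProbabilityMeasure (μt t) := hμtprob t
    have hgood : ∀ q ∈ s.range, ∀ q' ∈ s.range,
        q.1 + t • (q.2 - q.1) = q'.1 + t • (q'.2 - q'.1) → q.2 - q.1 = q'.2 - q'.1 := by
      intro q hq q' hq' he
      by_contra hne
      exact htS ⟨q, hq, q', hq', he, hne⟩
    obtain ⟨φ₀, hφ₀m, ⟨C₀, hC₀⟩, hφ₀val⟩ := exists_phi s.range t hgood
    have hC₀0 : 0 ≤ C₀ := le_trans (norm_nonneg _) (hC₀ 0)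
    have hφ₀it : ∀ v, φ₀ (it t v) = (s v).2 - (s v).1 := fun v =>
      hφ₀val (s v) (s.mem_range_self v)
    obtain ⟨δ₁, hδ₁, hTaylor⟩ := hDf (μt t) hμPk (η / M) (div_pos hη hMpos)
    refine ⟨δ₁ / M, div_pos hδ₁ hMpos, ?_⟩
    intro h h0 hhδ hh1
    set φ : Ed d → Ed d := fun x => h • φ₀ x with hφ
    have hφm : Measurable φ := hφ₀m.const_smul h
    -- pushing forward along id + φ moves the interpolation forward
    have hadd : Measurable fun x : Ed d => x + φ x := measurable_id.add hφm
    have hmap : (μt t).map (fun x => x + φ x) = μt (t + h) := by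
      rw [hμt]
      rw [Measure.map_map hadd (hitmeas t)]
      congr 1
      funext v
      simp only [Function.comp, hφ, hit]
      rw [hφ₀it v]
      rw [add_smul]
      module
    -- L^k norm of φ
    have hφnorm : ∫ x, ‖φ x‖ ^ k ∂(μt t) = h ^ k * m2 := by
      rw [hμt]
      have hasm2 : AEStronglyMeasurable (fun x : Ed d => ‖φ x‖ ^ k) (P.map (it t)) :=
        (hnormk_meas.comp hφm).aestronglyMeasurable
      rw [integral_map (hitmeas t).aemeasurable hasm2]
      rw [hm2, ← integral_const_mul]
      apply integral_congr_ae
      filter_upwards with v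
      simp only [hφ]
      rw [hφ₀it v, norm_smul, Real.norm_eq_abs, abs_of_pos h0,
        Real.mul_rpow h0.le (norm_nonneg _)]
    have hφLk : (∫ x, ‖φ x‖ ^ k ∂(μt t)) ^ (1 / k) = h * M := by
      rw [hφnorm, mul_rpow_inv hk0 h0.le hm2nonneg]
    have hφmem : MemLp φ (ENNReal.ofReal k) (μt t) := by
      refine MemLp.of_bound hφm.aestronglyMeasurable (|h| * C₀) ?_
      filter_upwards with x
      rw [hφ]
      simp only []
      rw [norm_smul, Real.norm_eq_abs]
      exact mul_le_mul_of_nonneg_left (hC₀ x) (abs_nonneg h)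
    -- a.e. the measure lives on a finite set

    set Z : Finset (Ed d) := s.range.image (fun q => q.1 + t • (q.2 - q.1)) with hZ
    have hpre : it t ⁻¹' ((Z : Set (Ed d)))ᶜ = ∅ := by
      ext v
      simp only [Set.mem_preimage, Set.mem_compl_iff, Finset.mem_coe,
        Set.mem_empty_iff_false, iff_false, not_not]
      exact Finset.mem_image.mpr ⟨s v, s.mem_range_self v, rfl⟩
    have hZ0 : μt t ((Z : Set (Ed d))ᶜ) = 0 := by
      rw [hμt]
      rw [Measure.map_apply (hitmeas t) (Finset.measurableSet Z).compl, hpre, measure_empty]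
    have haeZ : ∀ᵐ x ∂(μt t), x ∈ (Z : Set (Ed d)) := by
      refine Filter.eventually_iff.mpr ?_
      rw [Set.setOf_mem_eq]
      exact mem_ae_iff.mpr hZ0
    have hDfc := hDfcont (μt t) hμPk
    set CZ : NNReal := Z.sup (fun z => ‖Df (μt t) z‖₊) with hCZ
    have hDfboundae : ∀ᵐ x ∂(μt t), ‖Df (μt t) x‖ ≤ (CZ : ℝ) := by
      filter_upwards [haeZ] with x hx
      have h1 : ‖Df (μt t) x‖₊ ≤ CZ := Finset.le_sup (f := fun z => ‖Df (μt t) z‖₊) (Finset.mem_coe.mp hx)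
      calc ‖Df (μt t) x‖ = ((‖Df (μt t) x‖₊ : ℝ)) := (coe_nnnorm _).symm
        _ ≤ (CZ : ℝ) := by exact_mod_cast h1
    have hφbound : ∀ x, ‖φ x‖ ≤ |h| * C₀ := by
      intro x
      have : ‖φ x‖ = |h| * ‖φ₀ x‖ := by
        rw [hφ]; simp only []; rw [norm_smul, Real.norm_eq_abs]
      rw [this]
      exact mul_le_mul_of_nonneg_left (hC₀ x) (abs_nonneg h)
    have hDfmem : MemLp (Df (μt t)) (ENNReal.ofReal (k / (k - 1))) (μt t) :=
      MemLp.of_bound hDfc.aestronglyMeasurable (CZ : ℝ) hDfboundae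
    have hconj : k.HolderConjugate (k / (k - 1)) := Real.HolderConjugate.conjExponent hk
    have hinner_asm : AEStronglyMeasurable (fun x => ⟪Df (μt t) x, φ x⟫) (μt t) :=
      hDfc.aestronglyMeasurable.inner hφm.aestronglyMeasurable
    have hinner_int : Integrable (fun x => ⟪Df (μt t) x, φ x⟫) (μt t) := by
      refine Integrable.mono' (integrable_const ((CZ : ℝ) * (|h| * C₀))) hinner_asm ?_
      filter_upwards [hDfboundae] with x hx
      calc ‖⟪Df (μt t) x, φ x⟫‖ = |⟪Df (μt t) x, φ x⟫| := Real.norm_eq_abs _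
        _ ≤ ‖Df (μt t) x‖ * ‖φ x‖ := abs_real_inner_le_norm _ _
        _ ≤ (CZ : ℝ) * (|h| * C₀) :=
            mul_le_mul hx (hφbound x) (norm_nonneg _) (NNReal.coe_nonneg _)
    have hprod_int : Integrable (fun x => ‖φ x‖ * ‖Df (μt t) x‖) (μt t) := by
      refine Integrable.mono' (integrable_const ((|h| * C₀) * (CZ : ℝ)))
        (hφm.norm.aestronglyMeasurable.mul hDfc.norm.aestronglyMeasurable) ?_
      filter_upwards [hDfboundae] with x hx
      have h1 : 0 ≤ ‖φ x‖ * ‖Df (μt t) x‖ := by positivity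
      rw [Real.norm_of_nonneg h1]
      refine mul_le_mul (hφbound x) hx (norm_nonneg _) ?_
      exact mul_nonneg (abs_nonneg _) hC₀0
    have hHolder := integral_mul_norm_le_Lp_mul_Lq hconj hφmem hDfmem
    have hIbound : |∫ x, ⟪Df (μt t) x, φ x⟫ ∂(μt t)| ≤ K₀ * (h * M) := by
      have h1 : |∫ x, ⟪Df (μt t) x, φ x⟫ ∂(μt t)| ≤
          ∫ x, ‖φ x‖ * ‖Df (μt t) x‖ ∂(μt t) := by
        have habs : |∫ x, ⟪Df (μt t) x, φ x⟫ ∂(μt t)| ≤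
            ∫ x, |⟪Df (μt t) x, φ x⟫| ∂(μt t) := by
          calc |∫ x, ⟪Df (μt t) x, φ x⟫ ∂(μt t)|
              = ‖∫ x, ⟪Df (μt t) x, φ x⟫ ∂(μt t)‖ := (Real.norm_eq_abs _).symm
            _ ≤ ∫ x, ‖⟪Df (μt t) x, φ x⟫‖ ∂(μt t) := norm_integral_le_integral_norm _
            _ = ∫ x, |⟪Df (μt t) x, φ x⟫| ∂(μt t) := by
                simp only [Real.norm_eq_abs]
        refine habs.trans ?_
        refine integral_mono hinner_int.abs hprod_int ?_
        intro x
        calc |⟪Df (μt t) x, φ x⟫| ≤ ‖Df (μt t) x‖ * ‖φ x‖ := abs_real_inner_le_norm _ _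
          _ = ‖φ x‖ * ‖Df (μt t) x‖ := mul_comm _ _
      have h2 := hK₀ (μt t) hμPk
      calc |∫ x, ⟪Df (μt t) x, φ x⟫ ∂(μt t)|
          ≤ ∫ x, ‖φ x‖ * ‖Df (μt t) x‖ ∂(μt t) := h1
        _ ≤ (∫ x, ‖φ x‖ ^ k ∂(μt t)) ^ (1 / k) *
            (∫ x, ‖Df (μt t) x‖ ^ (k / (k - 1)) ∂(μt t)) ^ (1 / (k / (k - 1))) := hHolder
        _ ≤ (h * M) * K₀ := by
            rw [hφLk]
            exact mul_le_mul_of_nonneg_left h2 (mul_nonneg h0.le hMnonneg)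
        _ = K₀ * (h * M) := mul_comm _ _
    have happly := hTaylor φ hφm hφmem (by
      rw [hφLk]
      calc h * M ≤ (δ₁ / M) * M := mul_le_mul_of_nonneg_right hhδ hMnonneg
        _ = δ₁ := div_mul_cancel₀ δ₁ hMpos.ne')
    rw [hmap, hφLk] at happly
    have hgdef : ∀ u : ℝ, g u = f (μt u) := fun u => rfl
    have htri : |g (t + h) - g t| ≤
        |g (t + h) - g t - ∫ x, ⟪Df (μt t) x, φ x⟫ ∂(μt t)| +
        |∫ x, ⟪Df (μt t) x, φ x⟫ ∂(μt t)| := by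
      have h3 : (g (t + h) - g t - ∫ x, ⟪Df (μt t) x, φ x⟫ ∂(μt t)) +
          (∫ x, ⟪Df (μt t) x, φ x⟫ ∂(μt t)) = g (t + h) - g t := by ring
      calc |g (t + h) - g t|
          = |(g (t + h) - g t - ∫ x, ⟪Df (μt t) x, φ x⟫ ∂(μt t)) +
            ∫ x, ⟪Df (μt t) x, φ x⟫ ∂(μt t)| := by rw [h3]
        _ ≤ _ := abs_add_le _ _
    rw [hgdef (t + h), hgdef t] at htri ⊢
    calc |f (μt (t + h)) - f (μt t)|
        ≤ |f (μt (t + h)) - f (μt t) - ∫ x, ⟪Df (μt t) x, φ x⟫ ∂(μt t)| +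
          |∫ x, ⟪Df (μt t) x, φ x⟫ ∂(μt t)| := htri
      _ ≤ η / M * (h * M) + K₀ * (h * M) := add_le_add happly hIbound
      _ = (K₀ * M + η) * h := by field_simp; ring
  -- conclude via the segment lemma
  have hfinal := seg_lemma g (K₀ * M) (mul_nonneg hK₀0 hMnonneg) _ hSfin hgc hloc
  have h0eq : μt 0 = P.map (fun v => (s v).1) := by
    rw [hμt]
    show P.map (it 0) = P.map (fun v => (s v).1)
    congr 1
    funext v
    simp only [hit, zero_smul, add_zero]
  have h1eq : μt 1 = P.map (fun v => (s v).2) := by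
    rw [hμt]
    show P.map (it 1) = P.map (fun v => (s v).2)
    congr 1
    funext v
    simp only [hit, one_smul]
    abel
  have hgdef : ∀ u : ℝ, g u = f (μt u) := fun u => rfl
  calc |f (P.map fun v => (s v).1) - f (P.map fun v => (s v).2)|
      = |g 0 - g 1| := by rw [hgdef 0, hgdef 1, h0eq, h1eq]
    _ = |g 1 - g 0| := abs_sub_comm _ _
    _ ≤ K₀ * M := hfinal

end WkAux

open WkAux in
/-- an `L`-differentiable function on `𝒫_k` (`k > 1`) whose
`L`-derivatives have continuous versions of at most `(k-1)`-polynomial growth and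
uniformly bounded `L^{k*}`-norms `K₀` is globally `K₀`-Lipschitz in `W_k`. -/
theorem LDeriv_bound_implies_Wk_Lipschitz
    (k : ℝ) (hk : 1 < k)
    (f : Measure (Ed d) → ℝ)
    (hfcont : ∀ μ ∈ Pk k d, ∀ ε > (0:ℝ), ∃ δ > (0:ℝ), ∀ ν ∈ Pk k d,
      Wass k d ν μ < δ → |f ν - f μ| < ε)
    (Df : Measure (Ed d) → Ed d → Ed d)
    (hDf : ∀ μ ∈ Pk k d, IsLDerivAt k d f μ (Df μ))
    (hDfcont : ∀ μ ∈ Pk k d, Continuous (Df μ))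
    (hDfgrowth : ∀ μ ∈ Pk k d, ∃ c : ℝ, ∀ x, ‖Df μ x‖ ≤ c * (1 + ‖x‖ ^ (k - 1)))
    (K₀ : ℝ)
    (hK₀ : ∀ μ ∈ Pk k d, (∫ x, ‖Df μ x‖ ^ (k / (k - 1)) ∂μ) ^ (1 / (k / (k - 1))) ≤ K₀) :
    ∀ μ₁ ∈ Pk k d, ∀ μ₂ ∈ Pk k d, |f μ₁ - f μ₂| ≤ K₀ * Wass k d μ₁ μ₂ := by
  intro μ₁ hμ₁ μ₂ hμ₂
  have hk0 : (0:ℝ) < k := lt_trans one_pos hk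
  have hK₀0 : 0 ≤ K₀ :=
    le_trans (Real.rpow_nonneg (integral_nonneg fun x =>
      Real.rpow_nonneg (norm_nonneg _) _) _) (hK₀ μ₁ hμ₁)
  haveI h1p := hμ₁.1
  haveI h2p := hμ₂.1
  have hrk : Continuous fun r : ℝ => r ^ k :=
    continuous_iff_continuousAt.mpr fun x => Real.continuousAt_rpow_const x k (Or.inr hk0.le)
  have hnormk_meas : Measurable fun x : Ed d => ‖x‖ ^ k :=
    hrk.measurable.comp measurable_norm
  refine le_of_forall_pos_le_add ?_
  intro ε hε
  -- near-optimal coupling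
  have hSne : {r : ℝ | ∃ π : Measure (Ed d × Ed d),
      π.map Prod.fst = μ₁ ∧ π.map Prod.snd = μ₂ ∧
      r = (∫ p, ‖p.1 - p.2‖ ^ k ∂π) ^ (1 / k)}.Nonempty := by
    refine ⟨_, μ₁.prod μ₂, ?_, ?_, rfl⟩
    · rw [Measure.map_fst_prod]; simp
    · rw [Measure.map_snd_prod]; simp
  set ε₂ := ε / (4 * (K₀ + 1)) with hε₂
  have hε₂pos : 0 < ε₂ := by positivity
  have hlt : sInf {r : ℝ | ∃ π : Measure (Ed d × Ed d),
      π.map Prod.fst = μ₁ ∧ π.map Prod.snd = μ₂ ∧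
      r = (∫ p, ‖p.1 - p.2‖ ^ k ∂π) ^ (1 / k)} < Wass k d μ₁ μ₂ + ε₂ := by
    have : Wass k d μ₁ μ₂ = sInf _ := rfl
    rw [Wass]
    linarith
  obtain ⟨r, hrmem, hrlt⟩ := exists_lt_of_csInf_lt hSne hlt
  obtain ⟨π, hπ1, hπ2, hr⟩ := hrmem
  have hrnonneg : 0 ≤ r := by
    rw [hr]
    exact Real.rpow_nonneg (integral_nonneg fun p =>
      Real.rpow_nonneg (norm_nonneg _) _) _
  -- π is a probability measure
  have huniv : π Set.univ = 1 := by
    have h : (π.map Prod.fst) Set.univ = μ₁ Set.univ := by rw [hπ1]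
    rw [Measure.map_apply measurable_fst MeasurableSet.univ, Set.preimage_univ] at h
    rw [h]
    exact measure_univ
  haveI hπprob : IsProbabilityMeasure π := ⟨huniv⟩
  -- integrability of the identity
  have hint1 : Integrable (fun v : Ed d × Ed d => ‖v.1‖ ^ k) π := by
    have h := hμ₁.2
    rw [← hπ1] at h
    exact (integrable_map_measure hnormk_meas.aestronglyMeasurable
      measurable_fst.aemeasurable).mp h
  have hint2 : Integrable (fun v : Ed d × Ed d => ‖v.2‖ ^ k) π := by
    have h := hμ₂.2
    rw [← hπ2] at h
    exact (integrable_map_measure hnormk_meas.aestronglyMeasurable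
      measurable_snd.aemeasurable).mp h
  have hnormk_meas2 : Measurable fun v : Ed d × Ed d => ‖v‖ ^ k :=
    hrk.measurable.comp measurable_norm
  have hintid : Integrable (fun v : Ed d × Ed d => ‖v‖ ^ k) π := by
    refine Integrable.mono' (hint1.add hint2) hnormk_meas2.aestronglyMeasurable ?_
    filter_upwards with v
    rw [Real.norm_of_nonneg (Real.rpow_nonneg (norm_nonneg _) _)]
    have h1 : ‖v‖ ^ k ≤ max (‖v.1‖ ^ k) (‖v.2‖ ^ k) := by
      rcases max_cases ‖v.1‖ ‖v.2‖ with ⟨hm, -⟩ | ⟨hm, -⟩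
      · refine le_max_of_le_left (Real.rpow_le_rpow (norm_nonneg _) ?_ hk0.le)
        rw [Prod.norm_def, hm]
      · refine le_max_of_le_right (Real.rpow_le_rpow (norm_nonneg _) ?_ hk0.le)
        rw [Prod.norm_def, hm]
    refine h1.trans ?_
    refine max_le ?_ ?_
    · exact le_add_of_nonneg_right (Real.rpow_nonneg (norm_nonneg _) _)
    · exact le_add_of_nonneg_left (Real.rpow_nonneg (norm_nonneg _) _)
  have hidmem : MemLp (id : Ed d × Ed d → Ed d × Ed d) (ENNReal.ofReal k) π := by
    have hq0 : ENNReal.ofReal k ≠ 0 := by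
      simp [ENNReal.ofReal_eq_zero, not_le, hk0]
    have hqt : ENNReal.ofReal k ≠ ⊤ := ENNReal.ofReal_ne_top
    refine (memLp_norm_rpow_iff aestronglyMeasurable_id hq0 hqt).mp ?_
    rw [ENNReal.div_self hq0 hqt]
    rw [memLp_one_iff_integrable]
    have : (fun v : Ed d × Ed d => ‖id v‖ ^ (ENNReal.ofReal k).toReal) =
        fun v : Ed d × Ed d => ‖v‖ ^ k := by
      funext v
      rw [ENNReal.toReal_ofReal hk0.le, id]
    rw [this]
    exact hintid
  -- continuity radii
  obtain ⟨δ₁, hδ₁, hf1⟩ := hfcont μ₁ hμ₁ (ε / 4) (by positivity)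
  obtain ⟨δ₂, hδ₂, hf2⟩ := hfcont μ₂ hμ₂ (ε / 4) (by positivity)
  set δs := min (min δ₁ δ₂) (ε / (8 * (K₀ + 1))) with hδs
  have hδspos : 0 < δs := by
    refine lt_min (lt_min hδ₁ hδ₂) ?_
    positivity
  -- simple approximation of the identity
  obtain ⟨s, hsnorm, hsmem⟩ := hidmem.exists_simpleFunc_eLpNorm_sub_lt
    ENNReal.ofReal_ne_top (ε := ENNReal.ofReal δs) (by simp [hδspos, le_of_lt])
  have hsub_mem : MemLp (⇑s - (id : Ed d × Ed d → Ed d × Ed d)) (ENNReal.ofReal k) π :=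
    hsmem.sub hidmem
  have hsub_asm : AEStronglyMeasurable (⇑s - (id : Ed d × Ed d → Ed d × Ed d)) π :=
    hsub_mem.aestronglyMeasurable
  have hD_eq : (∫ v, ‖(⇑s - (id : Ed d × Ed d → Ed d × Ed d)) v‖ ^ k ∂π) ^ (1 / k) =
      (eLpNorm (⇑s - (id : Ed d × Ed d → Ed d × Ed d)) (ENNReal.ofReal k) π).toReal :=
    Lk_eq_toReal_eLpNorm hk0 π _ hsub_asm
  have hDlt : (eLpNorm (⇑s - (id : Ed d × Ed d → Ed d × Ed d)) (ENNReal.ofReal k) π).toReal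
      < δs := by
    rw [eLpNorm_sub_comm]
    exact ENNReal.toReal_lt_of_lt_ofReal hsnorm
  set D := (eLpNorm (⇑s - (id : Ed d × Ed d → Ed d × Ed d)) (ENNReal.ofReal k) π).toReal
    with hD
  have hDnonneg : 0 ≤ D := ENNReal.toReal_nonneg
  -- integrability of ‖s v - v‖ ^ k
  have hsubint : Integrable (fun v : Ed d × Ed d => ‖s v - v‖ ^ k) π := by
    have h := hsub_mem.integrable_norm_rpow (by simp [ENNReal.ofReal_eq_zero, not_le, hk0])
      ENNReal.ofReal_ne_top
    have heq : (fun v : Ed d × Ed d =>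
        ‖(⇑s - (id : Ed d × Ed d → Ed d × Ed d)) v‖ ^ (ENNReal.ofReal k).toReal) =
        fun v : Ed d × Ed d => ‖s v - v‖ ^ k := by
      funext v
      rw [ENNReal.toReal_ofReal hk0.le]
      rfl
    rwa [heq] at h
  -- the two endpoint empirical measures
  obtain ⟨Cs, hCs⟩ := s.exists_forall_norm_le
  have hμxPk : ∀ T : Ed d × Ed d → Ed d, Measurable T → (∀ v, ‖T v‖ ≤ Cs) →
      π.map T ∈ Pk k d := by
    intro T hTm hTb
    refine ⟨Measure.isProbabilityMeasure_map hTm.aemeasurable, ?_⟩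
    rw [integrable_map_measure hnormk_meas.aestronglyMeasurable hTm.aemeasurable]
    refine Integrable.mono' (integrable_const (Cs ^ k))
      (hnormk_meas.comp hTm).aestronglyMeasurable ?_
    filter_upwards with v
    simp only [Function.comp]
    rw [Real.norm_of_nonneg (Real.rpow_nonneg (norm_nonneg _) _)]
    exact Real.rpow_le_rpow (norm_nonneg _) (hTb v) hk0.le
  have hs1m : Measurable fun v : Ed d × Ed d => (s v).1 := measurable_fst.comp s.measurable
  have hs2m : Measurable fun v : Ed d × Ed d => (s v).2 := measurable_snd.comp s.measurable
  have hμx : π.map (fun v => (s v).1) ∈ Pk k d :=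
    hμxPk _ hs1m fun v => (norm_fst_le _).trans (hCs v)
  have hμy : π.map (fun v => (s v).2) ∈ Pk k d :=
    hμxPk _ hs2m fun v => (norm_snd_le _).trans (hCs v)
  -- Wasserstein bound to the marginals
  have hWcomp : ∀ (T U : Ed d × Ed d → Ed d), Measurable T → Measurable U →
      (∀ v, ‖T v - U v‖ ≤ ‖s v - v‖) →
      Wass k d (π.map T) (π.map U) ≤ D := by
    intro T U hTm hUm hTU
    have hpm : Measurable fun v => (T v, U v) := hTm.prodMk hUm
    have h1 : (π.map (fun v => (T v, U v))).map Prod.fst = π.map T := by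
      rw [Measure.map_map measurable_fst hpm]; rfl
    have h2 : (π.map (fun v => (T v, U v))).map Prod.snd = π.map U := by
      rw [Measure.map_map measurable_snd hpm]; rfl
    have hasm : AEStronglyMeasurable (fun p : Ed d × Ed d => ‖p.1 - p.2‖ ^ k)
        (π.map (fun v => (T v, U v))) :=
      (hnormk_meas.comp (measurable_fst.sub measurable_snd)).aestronglyMeasurable
    have hce : ∫ p, ‖p.1 - p.2‖ ^ k ∂(π.map (fun v => (T v, U v))) =
        ∫ v, ‖T v - U v‖ ^ k ∂π := by
      rw [integral_map hpm.aemeasurable hasm]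
    have hTUint : Integrable (fun v : Ed d × Ed d => ‖T v - U v‖ ^ k) π := by
      refine Integrable.mono' hsubint
        ((hrk.measurable.comp (hTm.sub hUm).norm)).aestronglyMeasurable ?_
      filter_upwards with v
      rw [Real.norm_of_nonneg (Real.rpow_nonneg (norm_nonneg _) _)]
      exact Real.rpow_le_rpow (norm_nonneg _) (hTU v) hk0.le
    calc Wass k d (π.map T) (π.map U)
        ≤ (∫ p, ‖p.1 - p.2‖ ^ k ∂(π.map (fun v => (T v, U v)))) ^ (1 / k) :=
          wass_le k _ h1 h2
      _ = (∫ v, ‖T v - U v‖ ^ k ∂π) ^ (1 / k) := by rw [hce]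
      _ ≤ (∫ v, ‖s v - v‖ ^ k ∂π) ^ (1 / k) := by
          refine Real.rpow_le_rpow (integral_nonneg fun v =>
            Real.rpow_nonneg (norm_nonneg _) _) ?_ (by positivity)
          refine integral_mono hTUint hsubint ?_
          intro v
          exact Real.rpow_le_rpow (norm_nonneg _) (hTU v) hk0.le
      _ = D := by
          rw [hD, ← Lk_eq_toReal_eLpNorm hk0 π _ hsub_asm]
          refine congrArg (fun z : ℝ => z ^ (1/k)) ?_
          apply integral_congr_ae
          filter_upwards with v
          simp [Pi.sub_apply]
  have hWx : Wass k d (π.map (fun v => (s v).1)) μ₁ < δ₁ := by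
    rw [← hπ1]
    have := hWcomp (fun v => (s v).1) (fun v => v.1) hs1m measurable_fst ?_
    · calc Wass k d (π.map (fun v => (s v).1)) (π.map (fun v => v.1)) ≤ D := this
        _ < δs := hDlt
        _ ≤ δ₁ := le_trans (min_le_left _ _) (min_le_left _ _)
    · intro v
      have : (s v).1 - v.1 = (s v - v).1 := rfl
      rw [this]
      exact norm_fst_le _
  have hWy : Wass k d (π.map (fun v => (s v).2)) μ₂ < δ₂ := by
    rw [← hπ2]
    have := hWcomp (fun v => (s v).2) (fun v => v.2) hs2m measurable_snd ?_
    · calc Wass k d (π.map (fun v => (s v).2)) (π.map (fun v => v.2)) ≤ D := this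
        _ < δs := hDlt
        _ ≤ δ₂ := le_trans (min_le_left _ _) (min_le_right _ _)
    · intro v
      have : (s v).2 - v.2 = (s v - v).2 := rfl
      rw [this]
      exact norm_snd_le _
  have hclose1 : |f (π.map (fun v => (s v).1)) - f μ₁| < ε / 4 :=
    hf1 _ hμx hWx
  have hclose2 : |f (π.map (fun v => (s v).2)) - f μ₂| < ε / 4 :=
    hf2 _ hμy hWy
  -- empirical Lipschitz bound
  have hemp := empirical_lipschitz k hk f hfcont Df hDf hDfcont K₀ hK₀0 hK₀ π hπprob s
  -- Minkowski: the matching cost is at most r + 2 D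
  have hMink : (∫ v, ‖(s v).2 - (s v).1‖ ^ k ∂π) ^ (1 / k) ≤ r + 2 * D := by
    set A : Ed d × Ed d → Ed d := fun v => v.2 - v.1 with hA
    set B : Ed d × Ed d → Ed d := fun v => (s v).2 - v.2 with hB
    set Cc : Ed d × Ed d → Ed d := fun v => v.1 - (s v).1 with hCc
    have hFeq : (fun v : Ed d × Ed d => (s v).2 - (s v).1) = A + B + Cc := by
      funext v
      simp only [Pi.add_apply, hA, hB, hCc]
      abel
    have hAasm : AEStronglyMeasurable A π :=
      (measurable_snd.sub measurable_fst).aestronglyMeasurable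
    have hBasm : AEStronglyMeasurable B π :=
      (hs2m.sub measurable_snd).aestronglyMeasurable
    have hCasm : AEStronglyMeasurable Cc π :=
      (measurable_fst.sub hs1m).aestronglyMeasurable
    have hFasm : AEStronglyMeasurable (fun v : Ed d × Ed d => (s v).2 - (s v).1) π :=
      (hs2m.sub hs1m).aestronglyMeasurable
    have h1k : (1:ℝ≥0∞) ≤ ENNReal.ofReal k := by
      rw [ENNReal.one_le_ofReal]
      exact hk.le
    have hBle : eLpNorm B (ENNReal.ofReal k) π ≤
        eLpNorm (⇑s - (id : Ed d × Ed d → Ed d × Ed d)) (ENNReal.ofReal k) π := by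
      refine eLpNorm_mono_ae ?_
      filter_upwards with v
      have : B v = (s v - v).2 := rfl
      rw [this]
      exact norm_snd_le _
    have hCle : eLpNorm Cc (ENNReal.ofReal k) π ≤
        eLpNorm (⇑s - (id : Ed d × Ed d → Ed d × Ed d)) (ENNReal.ofReal k) π := by
      refine eLpNorm_mono_ae ?_
      filter_upwards with v
      have h5 : Cc v = -((s v - v).1) := by
        simp only [hCc]
        rw [Prod.fst_sub]
        abel
      rw [h5, norm_neg]
      exact norm_fst_le _
    have htriangle : eLpNorm (fun v : Ed d × Ed d => (s v).2 - (s v).1)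
        (ENNReal.ofReal k) π ≤
        eLpNorm A (ENNReal.ofReal k) π +
        eLpNorm (⇑s - (id : Ed d × Ed d → Ed d × Ed d)) (ENNReal.ofReal k) π +
        eLpNorm (⇑s - (id : Ed d × Ed d → Ed d × Ed d)) (ENNReal.ofReal k) π := by
      rw [hFeq]
      calc eLpNorm (A + B + Cc) (ENNReal.ofReal k) π
          ≤ eLpNorm (A + B) (ENNReal.ofReal k) π + eLpNorm Cc (ENNReal.ofReal k) π :=
            eLpNorm_add_le (hAasm.add hBasm) hCasm h1k
        _ ≤ eLpNorm A (ENNReal.ofReal k) π + eLpNorm B (ENNReal.ofReal k) π +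
            eLpNorm Cc (ENNReal.ofReal k) π :=
            add_le_add (eLpNorm_add_le hAasm hBasm h1k) le_rfl
        _ ≤ _ := by
            exact add_le_add (add_le_add le_rfl hBle) hCle
    have hAfin : eLpNorm A (ENNReal.ofReal k) π ≠ ⊤ := by
      have hAmem : MemLp A (ENNReal.ofReal k) π := by
        refine MemLp.mono (hidmem.const_smul (2:ℝ)) hAasm ?_
        filter_upwards with v
        have h6 : ‖A v‖ ≤ ‖v.2‖ + ‖v.1‖ := norm_sub_le _ _
        have h7 : ‖((2:ℝ) • (id : Ed d × Ed d → Ed d × Ed d)) v‖ = 2 * ‖v‖ := by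
          rw [Pi.smul_apply, norm_smul]
          simp
        rw [h7]
        have h8 : ‖v.2‖ ≤ ‖v‖ := norm_snd_le _
        have h9 : ‖v.1‖ ≤ ‖v‖ := norm_fst_le _
        linarith
      exact hAmem.eLpNorm_ne_top
    have hsfin : eLpNorm (⇑s - (id : Ed d × Ed d → Ed d × Ed d)) (ENNReal.ofReal k) π ≠ ⊤ :=
      hsub_mem.eLpNorm_ne_top
    have hAeq : (eLpNorm A (ENNReal.ofReal k) π).toReal = r := by
      have h10 : (∫ v, ‖A v‖ ^ k ∂π) ^ (1 / k) =
          (eLpNorm A (ENNReal.ofReal k) π).toReal :=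
        Lk_eq_toReal_eLpNorm hk0 π _ hAasm
      rw [← h10, hr]
      congr 1
      apply integral_congr_ae
      filter_upwards with v
      rw [hA]
      simp only []
      rw [norm_sub_rev]
    calc (∫ v, ‖(s v).2 - (s v).1‖ ^ k ∂π) ^ (1 / k)
        = (eLpNorm (fun v : Ed d × Ed d => (s v).2 - (s v).1)
            (ENNReal.ofReal k) π).toReal := Lk_eq_toReal_eLpNorm hk0 π _ hFasm
      _ ≤ (eLpNorm A (ENNReal.ofReal k) π +
          eLpNorm (⇑s - (id : Ed d × Ed d → Ed d × Ed d)) (ENNReal.ofReal k) π +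
          eLpNorm (⇑s - (id : Ed d × Ed d → Ed d × Ed d)) (ENNReal.ofReal k) π).toReal := by
          refine ENNReal.toReal_mono ?_ htriangle
          exact ENNReal.add_ne_top.mpr ⟨ENNReal.add_ne_top.mpr ⟨hAfin, hsfin⟩, hsfin⟩
      _ = r + 2 * D := by
          rw [ENNReal.toReal_add (ENNReal.add_ne_top.mpr ⟨hAfin, hsfin⟩) hsfin,
            ENNReal.toReal_add hAfin hsfin, hAeq]
          rw [← hD]
          ring
  -- put everything together
  have hDδs : D < δs := hDlt
  have hδs3 : δs ≤ ε / (8 * (K₀ + 1)) := min_le_right _ _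
  have hrW : r < Wass k d μ₁ μ₂ + ε₂ := hrlt
  have hWnn : 0 ≤ Wass k d μ₁ μ₂ := by
    apply Real.sInf_nonneg
    rintro x ⟨π', -, -, rfl⟩
    exact Real.rpow_nonneg (integral_nonneg fun p =>
      Real.rpow_nonneg (norm_nonneg _) _) _
  calc |f μ₁ - f μ₂|
      ≤ |f μ₁ - f (π.map (fun v => (s v).1))| +
        |f (π.map (fun v => (s v).1)) - f (π.map (fun v => (s v).2))| +
        |f (π.map (fun v => (s v).2)) - f μ₂| := by
        have := abs_sub_le (f μ₁) (f (π.map (fun v => (s v).1))) (f μ₂)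
        have h2 := abs_sub_le (f (π.map (fun v => (s v).1)))
          (f (π.map (fun v => (s v).2))) (f μ₂)
        linarith
    _ ≤ ε / 4 + K₀ * (r + 2 * D) + ε / 4 := by
        have h1 : |f μ₁ - f (π.map (fun v => (s v).1))| ≤ ε / 4 := by
          rw [abs_sub_comm]
          exact hclose1.le
        have h2 : |f (π.map (fun v => (s v).2)) - f μ₂| ≤ ε / 4 := hclose2.le
        have h3 : |f (π.map (fun v => (s v).1)) - f (π.map (fun v => (s v).2))| ≤
            K₀ * (r + 2 * D) := by
          refine hemp.trans ?_
          exact mul_le_mul_of_nonneg_left hMink hK₀0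
        linarith
    _ ≤ K₀ * Wass k d μ₁ μ₂ + ε := by
        have hK1 : (0:ℝ) < K₀ + 1 := by linarith
        have h4 : K₀ * (r + 2 * D) ≤ K₀ * (Wass k d μ₁ μ₂ + ε₂ + 2 * δs) := by
          refine mul_le_mul_of_nonneg_left ?_ hK₀0
          linarith
        have h5 : K₀ * ε₂ ≤ ε / 4 := by
          have hK1 : K₀ + 1 ≠ 0 := by positivity
          have hx5 : K₀ * (ε / (4 * (K₀ + 1))) = ε / 4 - ε / (4 * (K₀ + 1)) := by
            field_simp
            ring
          have hp5 : 0 ≤ ε / (4 * (K₀ + 1)) := by positivity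
          rw [hε₂]
          linarith
        have h6 : K₀ * (2 * δs) ≤ ε / 4 := by
          have hK1 : K₀ + 1 ≠ 0 := by positivity
          have hm : K₀ * δs ≤ K₀ * (ε / (8 * (K₀ + 1))) :=
            mul_le_mul_of_nonneg_left hδs3 hK₀0
          have hx6 : K₀ * (ε / (8 * (K₀ + 1))) = ε / 8 - ε / (8 * (K₀ + 1)) := by
            field_simp
            ring
          have hp6 : 0 ≤ ε / (8 * (K₀ + 1)) := by positivity
          have hm2 : K₀ * (2 * δs) = 2 * (K₀ * δs) := by ring
          linarith [hm, hx6, hp6]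
        have h7 : K₀ * (Wass k d μ₁ μ₂ + ε₂ + 2 * δs) =
            K₀ * Wass k d μ₁ μ₂ + K₀ * ε₂ + K₀ * (2 * δs) := by ring
        linarith
end
end

section
/- Let k ≥ 1 and let h ∈ C¹(ℝ^d) satisfy |∇h(y)| ≤ c(1+|y|^{k−1}) for all y and some constant c > 0. Let F ∈ C¹(ℝ). Then the function f on 𝒫_k defined by f(μ) := F(μ(h)) is intrinsically differentiable at every μ ∈ 𝒫_k, with intrinsic directional derivative D^I_φ f(μ) = F'(μ(h)) · ∫ ⟨∇h(x), φ(x)⟩ μ(dx) for every φ ∈ L^k(ℝ^d → ℝ^d; μ); equivalently, the intrinsic derivative is D^I f(μ)(x) = F'(μ(h)) ∇h(x). -/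
open MeasureTheory Filter
open scoped ENNReal Topology RealInnerProductSpace

/-- for a cylindrical function `f(μ) = F(μ(h))` with `F ∈ C¹(ℝ)` and
`h ∈ C¹(ℝ^d)` satisfying `|∇h(y)| ≤ c(1+|y|^{k-1})`, `f` is intrinsically
differentiable at every `μ ∈ 𝒫_k` with
`D^I_φ f(μ) = F'(μ(h)) ∫ ⟪∇h(x), φ(x)⟫ μ(dx)`. -/
theorem cylindrical_intrinsic_derivative
    (d : ℕ) (k : ℝ) (hk : 1 ≤ k)
    (h : EuclideanSpace ℝ (Fin d) → ℝ) (hh : ContDiff ℝ 1 h)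
    (c : ℝ) (hc : 0 < c)
    (hgrad : ∀ y, ‖gradient h y‖ ≤ c * (1 + ‖y‖ ^ (k - 1)))
    (F : ℝ → ℝ) (hF : ContDiff ℝ 1 F)
    (μ : Measure (EuclideanSpace ℝ (Fin d))) [IsProbabilityMeasure μ]
    (hμ : Integrable (fun x => ‖x‖ ^ k) μ)
    (φ : EuclideanSpace ℝ (Fin d) → EuclideanSpace ℝ (Fin d))
    (hφmeas : Measurable φ)
    (hφ : MemLp φ (ENNReal.ofReal k) μ) :
    Tendsto
      (fun ε : ℝ =>
        (F (∫ x, h x ∂(μ.map (fun x => x + ε • φ x))) - F (∫ x, h x ∂μ)) / ε)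
      (nhdsWithin 0 (Set.Ioi 0))
      (nhds (deriv F (∫ x, h x ∂μ) * ∫ x, ⟪gradient h x, φ x⟫ ∂μ)) := by
  have hk0 : (0:ℝ) ≤ k := by linarith
  have hk1 : (0:ℝ) ≤ k - 1 := by linarith
  have hd : Differentiable ℝ h := hh.differentiable one_ne_zero
  have hgnorm : ∀ y, ‖fderiv ℝ h y‖ = ‖gradient h y‖ := by
    intro y
    rw [gradient]
    exact (LinearIsometryEquiv.norm_map _ _).symm
  have hfapp : ∀ y v, fderiv ℝ h y v = ⟪gradient h y, v⟫ := by
    intro y v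
    rw [gradient, ← InnerProductSpace.toDual_apply_apply]
    rw [LinearIsometryEquiv.apply_symm_apply]
  have hgc : Continuous (gradient h) := by
    have hcf : Continuous (fderiv ℝ h) := hh.continuous_fderiv one_ne_zero
    exact (InnerProductSpace.toDual ℝ (EuclideanSpace ℝ (Fin d))).symm.continuous.comp hcf
  -- basic integrability facts
  have hPk0 : ENNReal.ofReal k ≠ 0 := by
    simp only [ne_eq, ENNReal.ofReal_eq_zero, not_le]; linarith
  have hPkt : ENNReal.ofReal k ≠ ∞ := ENNReal.ofReal_ne_top
  have hφ1 : Integrable φ μ := hφ.integrable (ENNReal.one_le_ofReal.mpr hk)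
  have hφk : Integrable (fun a => ‖φ a‖ ^ k) μ := by
    have := hφ.integrable_norm_rpow hPk0 hPkt
    simpa [ENNReal.toReal_ofReal hk0] using this
  have hid : MemLp (fun a : EuclideanSpace ℝ (Fin d) => a) (ENNReal.ofReal k) μ := by
    rw [show (fun a : EuclideanSpace ℝ (Fin d) => a) = id from rfl,
      ← memLp_norm_rpow_iff (p := ENNReal.ofReal k) aestronglyMeasurable_id hPk0 hPkt,
      ENNReal.div_self hPk0 hPkt, memLp_one_iff_integrable]
    simpa [ENNReal.toReal_ofReal hk0] using hμ
  have hnormx : MemLp (fun a : EuclideanSpace ℝ (Fin d) => ‖a‖) (ENNReal.ofReal k) μ := hid.norm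
  set ψ : EuclideanSpace ℝ (Fin d) → ℝ := fun a => ‖a‖ + ‖φ a‖ with hψdef
  have hψnn : ∀ a, 0 ≤ ψ a := fun a => by positivity
  have hψ : MemLp ψ (ENNReal.ofReal k) μ := hnormx.add hφ.norm
  have hψpow : MemLp (fun a => ψ a ^ (k - 1))
      (ENNReal.ofReal k / ENNReal.ofReal (k - 1)) μ := by
    have h1 := hψ.norm_rpow_div (ENNReal.ofReal (k - 1))
    have heq : (fun a => ‖ψ a‖ ^ (ENNReal.ofReal (k-1)).toReal) = fun a => ψ a ^ (k - 1) := by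
      funext a
      rw [Real.norm_of_nonneg (hψnn a), ENNReal.toReal_ofReal hk1]
    rwa [heq] at h1
  have hconj : (1:ℝ≥0∞)/1 = 1/(ENNReal.ofReal k / ENNReal.ofReal (k - 1)) + 1/ENNReal.ofReal k := by
    rw [one_div (ENNReal.ofReal k / ENNReal.ofReal (k - 1)),
      ENNReal.inv_div (Or.inr hPkt) (Or.inr hPk0), ENNReal.div_add_div_same,
      ← ENNReal.ofReal_one, ← ENNReal.ofReal_add hk1 zero_le_one]
    norm_num
    exact (ENNReal.div_self hPk0 hPkt).symm
  have hprod : Integrable (fun a => ψ a ^ (k - 1) * ‖φ a‖) μ := by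
    rw [← memLp_one_iff_integrable]
    haveI : ENNReal.HolderTriple (ENNReal.ofReal k / ENNReal.ofReal (k - 1)) (ENNReal.ofReal k) 1 :=
      ⟨by simpa only [one_div] using hconj.symm⟩
    exact MemLp.smul hφ.norm hψpow
  -- the bound function
  set B : EuclideanSpace ℝ (Fin d) → ℝ := fun a => c * ((1 + ψ a ^ (k - 1)) * ‖φ a‖) with hBdef
  have hBint : Integrable B μ := by
    have h1 : Integrable (fun a => ‖φ a‖ + ψ a ^ (k-1) * ‖φ a‖) μ := hφ1.norm.add hprod
    have h2 := h1.const_mul c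
    refine h2.congr (Eventually.of_forall fun a => ?_)
    simp only [hBdef]; ring
  have hmono : ∀ (a y : EuclideanSpace ℝ (Fin d)), ‖y‖ ≤ ψ a →
      ‖gradient h y‖ ≤ c * (1 + ψ a ^ (k-1)) := by
    intro a y hy
    refine (hgrad y).trans ?_
    have hle : ‖y‖ ^ (k-1) ≤ ψ a ^ (k-1) := Real.rpow_le_rpow (norm_nonneg y) hy hk1
    nlinarith
  set F' : ℝ → EuclideanSpace ℝ (Fin d) → ℝ :=
    fun ε a => ⟪gradient h (a + ε • φ a), φ a⟫ with hF'def
  have hF'deriv : ∀ (a : EuclideanSpace ℝ (Fin d)) (x : ℝ),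
      HasDerivAt (fun ε => h (a + ε • φ a)) (F' x a) x := by
    intro a x
    have h1 : HasDerivAt (fun ε : ℝ => a + ε • φ a) (φ a) x := by
      simpa using ((hasDerivAt_id x).smul_const (φ a)).const_add a
    have h2 := (hd (a + x • φ a)).hasFDerivAt.comp_hasDerivAt x h1
    rw [hfapp] at h2
    exact h2
  have hψbound : ∀ (a : EuclideanSpace ℝ (Fin d)), ∀ x ∈ Metric.ball (0:ℝ) 1,
      ‖a + x • φ a‖ ≤ ψ a := by
    intro a x hx
    simp only [Metric.mem_ball, dist_zero_right, Real.norm_eq_abs] at hx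
    calc ‖a + x • φ a‖ ≤ ‖a‖ + ‖x • φ a‖ := norm_add_le _ _
      _ ≤ ‖a‖ + 1 * ‖φ a‖ := by
          refine add_le_add_right ?_ _
          rw [norm_smul, Real.norm_eq_abs]
          exact mul_le_mul_of_nonneg_right hx.le (norm_nonneg _)
      _ = ψ a := by simp [hψdef]
  -- integrability of h
  have hhint : Integrable h μ := by
    have hb : ∀ a : EuclideanSpace ℝ (Fin d), ‖h a‖ ≤ |h 0| + c * (‖a‖ + ‖a‖ ^ k) := by
      intro a
      have key : ‖h a - h 0‖ ≤ (c * (1 + ‖a‖ ^ (k-1))) * ‖a - 0‖ := by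
        refine Convex.norm_image_sub_le_of_norm_fderiv_le
          (fun y _ => hd y) (fun y hy => ?_) (convex_closedBall (0:EuclideanSpace ℝ (Fin d)) ‖a‖)
          ?_ ?_
        · rw [hgnorm]
          refine (hgrad y).trans ?_
          have hyn : ‖y‖ ≤ ‖a‖ := by simpa using hy
          have hle : ‖y‖ ^ (k-1) ≤ ‖a‖ ^ (k-1) := Real.rpow_le_rpow (norm_nonneg y) hyn hk1
          nlinarith
        · simp
        · simp
      have hka : ‖a‖ ^ (k-1) * ‖a‖ = ‖a‖ ^ k := by
        rcases eq_or_ne (‖a‖) 0 with h0 | h0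
        · rw [h0, Real.zero_rpow (show k ≠ 0 by linarith)]
          simp
        · rw [← Real.rpow_add_one h0 (k-1)]
          norm_num
      rw [sub_zero] at key
      have h2 : ‖h a‖ ≤ ‖h a - h 0‖ + ‖h 0‖ := by
        calc ‖h a‖ = ‖h a - h 0 + h 0‖ := by ring_nf
          _ ≤ ‖h a - h 0‖ + ‖h 0‖ := norm_add_le _ _
      rw [Real.norm_eq_abs (h 0)] at h2
      nlinarith [norm_nonneg a, hc.le]
    refine Integrable.mono' ?_ hh.continuous.aestronglyMeasurable (Eventually.of_forall hb)
    exact (integrable_const _).add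
      (((hnormx.integrable (ENNReal.one_le_ofReal.mpr hk)).add hμ).const_mul c)
  -- dominated differentiation
  have key := hasDerivAt_integral_of_dominated_loc_of_deriv_le (μ := μ)
    (F := fun ε a => h (a + ε • φ a)) (F' := F') (x₀ := (0:ℝ)) (bound := B) (Metric.ball_mem_nhds 0 one_pos)
    (Eventually.of_forall fun x =>
      (hh.continuous.measurable.comp
        (measurable_id.add (hφmeas.const_smul x)) :
          Measurable fun a => h (a + x • φ a)).aestronglyMeasurable)
    (by simpa using hhint)
    (((hgc.measurable.comp
        (measurable_id.add (hφmeas.const_smul (0:ℝ)))).inner hφmeas).aestronglyMeasurable)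
    (Eventually.of_forall fun a => fun x hx => by
      have h1 : ‖F' x a‖ ≤ ‖gradient h (a + x • φ a)‖ * ‖φ a‖ := by
        rw [hF'def, Real.norm_eq_abs]
        exact abs_real_inner_le_norm _ _
      refine h1.trans ?_
      have h2 := mul_le_mul_of_nonneg_right (hmono a _ (hψbound a x hx)) (norm_nonneg (φ a))
      calc ‖gradient h (a + x • φ a)‖ * ‖φ a‖ ≤ c * (1 + ψ a ^ (k-1)) * ‖φ a‖ := h2
        _ = B a := by rw [hBdef]; ring)
    hBint
    (Eventually.of_forall fun a => fun x _ => hF'deriv a x)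
  obtain ⟨-, hG⟩ := key
  have hG0 : (∫ a, h (a + (0:ℝ) • φ a) ∂μ) = ∫ x, h x ∂μ := by simp
  have hI : (∫ a, F' 0 a ∂μ) = ∫ x, ⟪gradient h x, φ x⟫ ∂μ := by simp [hF'def]
  rw [hI] at hG
  have hFder : HasDerivAt F (deriv F (∫ x, h x ∂μ)) (∫ a, h (a + (0:ℝ) • φ a) ∂μ) := by
    rw [hG0]; exact ((hF.differentiable one_ne_zero) _).hasDerivAt
  have hcomp : HasDerivAt (fun ε : ℝ => F (∫ a, h (a + ε • φ a) ∂μ))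
      (deriv F (∫ x, h x ∂μ) * ∫ x, ⟪gradient h x, φ x⟫ ∂μ) 0 := by
    exact hFder.comp (0:ℝ) hG
  have hslope := hasDerivAt_iff_tendsto_slope.mp hcomp
  refine Tendsto.congr' ?_
    (hslope.mono_left (nhdsWithin_mono _ fun x hx => show x ≠ 0 from ne_of_gt (Set.mem_Ioi.mp hx)))
  have hmap : ∀ ε : ℝ, ∫ x, h x ∂(μ.map (fun x => x + ε • φ x)) = ∫ a, h (a + ε • φ a) ∂μ := by
    intro ε
    exact integral_map (measurable_id.add (hφmeas.const_smul ε)).aemeasurable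
      hh.continuous.aestronglyMeasurable
  filter_upwards with ε
  rw [slope_def_field, hmap ε, hG0, sub_zero]
end
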